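/- Fix φ̃ > 0 and L > 0. For γ > 0 let P(γ) denote the unique P > 0 satisfying log(1+P·γ) = 1 + (φ̃·γ − 1)/(1+P·γ). Then the transmit energy E(γ) = P(γ)·L/log(1+P(γ)·γ) is strictly decreasing in γ: if 0 < γ₁ < γ₂ then E(γ₁) > E(γ₂). -/

import Mathlib

private lemma N_hasDerivAt (x : ℝ) (hx : 0 < x) :
    HasDerivAt (fun y : ℝ => y * Real.log y - y + 1) (Real.log x) x := by
  have h1 : HasDerivAt (fun y : ℝ => y * Real.log y) (1 * Real.log x + x * x⁻¹) x :=
    (hasDerivAt_id x).mul (Real.hasDerivAt_log hx.ne')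
  have h2 := (h1.sub (hasDerivAt_id x)).add_const 1
  have e : 1 * Real.log x + x * x⁻¹ - 1 = Real.log x := by rw [mul_inv_cancel₀ hx.ne']; ring
  rw [e] at h2
  exact h2

private lemma N_mono : StrictMonoOn (fun x : ℝ => x * Real.log x - x + 1) (Set.Ici 1) := by
  apply strictMonoOn_of_deriv_pos (convex_Ici 1)
  · have hsub : Set.Ici (1:ℝ) ⊆ {0}ᶜ := by
      intro x hx
      simp only [Set.mem_compl_iff, Set.mem_singleton_iff]
      intro h; rw [h] at hx; exact absurd hx (by norm_num)
    exact ((continuousOn_id.mul (Real.continuousOn_log.mono hsub)).sub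
      continuousOn_id).add continuousOn_const
  · intro x hx
    rw [interior_Ici] at hx
    have hx1 : (1:ℝ) < x := hx
    rw [(N_hasDerivAt x (by linarith)).deriv]
    exact Real.log_pos hx1

private lemma N_pos {x : ℝ} (hx : 1 < x) : 0 < x * Real.log x - x + 1 := by
  have := N_mono (Set.self_mem_Ici) (Set.mem_Ici.mpr hx.le) hx
  simpa using this

private lemma G_mono : StrictMonoOn
    (fun x : ℝ => (x * Real.log x - x + 1) / (x - 1)) (Set.Ioi 1) := by
  apply strictMonoOn_of_deriv_pos (convex_Ioi 1)
  · apply ContinuousOn.div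
    · fun_prop (disch := intro x hx; exact ne_of_gt (lt_trans one_pos hx))
    · fun_prop
    · intro x hx
      exact sub_ne_zero.mpr (ne_of_gt hx)
  · intro x hx
    rw [interior_Ioi] at hx
    have hx1 : (1:ℝ) < x := hx
    have hx0 : (0:ℝ) < x := lt_trans one_pos hx1
    have hne : x - 1 ≠ 0 := sub_ne_zero.mpr hx1.ne'
    have hd : HasDerivAt (fun y : ℝ => (y * Real.log y - y + 1) / (y - 1))
        ((Real.log x * (x - 1) - (x * Real.log x - x + 1) * 1) / (x - 1) ^ 2) x := by
      exact (N_hasDerivAt x hx0).div ((hasDerivAt_id x).sub_const 1) hne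
    rw [hd.deriv]
    have hlog : Real.log x < x - 1 := Real.log_lt_sub_one_of_pos hx0 hx1.ne'
    have : 0 < Real.log x * (x - 1) - (x * Real.log x - x + 1) * 1 := by nlinarith
    positivity

theorem lambert_energy_decreasing_in_gain
    (φ L : ℝ) (hφ : 0 < φ) (hL : 0 < L) (P : ℝ → ℝ)
    (hP_pos : ∀ γ : ℝ, 0 < γ → 0 < P γ)
    (hP_eq : ∀ γ : ℝ, 0 < γ →
      Real.log (1 + P γ * γ) = 1 + (φ * γ - 1) / (1 + P γ * γ))
    (hP_unique : ∀ γ : ℝ, 0 < γ → ∀ Q : ℝ, 0 < Q →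
      Real.log (1 + Q * γ) = 1 + (φ * γ - 1) / (1 + Q * γ) → Q = P γ) :
    ∀ γ₁ γ₂ : ℝ, 0 < γ₁ → γ₁ < γ₂ →
      P γ₂ * L / Real.log (1 + P γ₂ * γ₂) <
        P γ₁ * L / Real.log (1 + P γ₁ * γ₁) := by
  intro γ₁ γ₂ hγ₁ h12
  have hγ₂ : 0 < γ₂ := hγ₁.trans h12
  set x₁ : ℝ := 1 + P γ₁ * γ₁ with hx₁def
  set x₂ : ℝ := 1 + P γ₂ * γ₂ with hx₂def
  have hx₁ : 1 < x₁ := by nlinarith [hP_pos γ₁ hγ₁]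
  have hx₂ : 1 < x₂ := by nlinarith [hP_pos γ₂ hγ₂]
  have hx₁0 : (0:ℝ) < x₁ := lt_trans one_pos hx₁
  have hx₂0 : (0:ℝ) < x₂ := lt_trans one_pos hx₂
  -- key equations N(xᵢ) = φ γᵢ
  have hN : ∀ γ : ℝ, 0 < γ → (1 + P γ * γ) * Real.log (1 + P γ * γ) - (1 + P γ * γ) + 1 = φ * γ := by
    intro γ hγ
    have h := hP_eq γ hγ
    have hx : (0:ℝ) < 1 + P γ * γ := by nlinarith [hP_pos γ hγ]
    field_simp at h
    nlinarith [h]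
  have hN₁ : x₁ * Real.log x₁ - x₁ + 1 = φ * γ₁ := hN γ₁ hγ₁
  have hN₂ : x₂ * Real.log x₂ - x₂ + 1 = φ * γ₂ := hN γ₂ hγ₂
  -- x₁ < x₂
  have hxx : x₁ < x₂ := by
    by_contra hle
    push_neg at hle
    have := N_mono.le_iff_le (Set.mem_Ici.mpr hx₂.le) (Set.mem_Ici.mpr hx₁.le)
    have h2 := this.mpr hle
    rw [hN₁, hN₂] at h2
    nlinarith
  -- key inequality: log x₁ * G x₁ < log x₂ * G x₂
  have hG := G_mono (Set.mem_Ioi.mpr hx₁) (Set.mem_Ioi.mpr hx₂) hxx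
  simp only at hG
  have hlog₁ : 0 < Real.log x₁ := Real.log_pos hx₁
  have hlog₂ : 0 < Real.log x₂ := Real.log_pos hx₂
  have hG₁ : 0 < (x₁ * Real.log x₁ - x₁ + 1) / (x₁ - 1) := by
    apply div_pos (N_pos hx₁) (by linarith)
  set A : ℝ := Real.log x₁ * ((x₁ * Real.log x₁ - x₁ + 1) / (x₁ - 1)) with hA
  set B : ℝ := Real.log x₂ * ((x₂ * Real.log x₂ - x₂ + 1) / (x₂ - 1)) with hB
  have hAB : A < B :=
    mul_lt_mul' (Real.log_lt_log hx₁0 hxx).le hG hG₁.le hlog₂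
  have hApos : 0 < A := mul_pos hlog₁ hG₁
  have hE₁ : P γ₁ * L / Real.log x₁ = L * φ / A := by
    rw [hA]
    have hP₁ : P γ₁ = (x₁ - 1) / γ₁ := by field_simp [hx₁def]; linarith
    rw [hP₁]
    have hγeq : γ₁ = (x₁ * Real.log x₁ - x₁ + 1) / φ := by
      field_simp
      linarith [hN₁]
    rw [hγeq]
    have h1 : x₁ - 1 ≠ 0 := by linarith
    have h2 : (x₁ * Real.log x₁ - x₁ + 1) ≠ 0 := (N_pos hx₁).ne'
    field_simp
  have hE₂ : P γ₂ * L / Real.log x₂ = L * φ / B := by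
    rw [hB]
    have hP₂ : P γ₂ = (x₂ - 1) / γ₂ := by field_simp [hx₂def]; linarith
    rw [hP₂]
    have hγeq : γ₂ = (x₂ * Real.log x₂ - x₂ + 1) / φ := by
      field_simp
      linarith [hN₂]
    rw [hγeq]
    have h1 : x₂ - 1 ≠ 0 := by linarith
    have h2 : (x₂ * Real.log x₂ - x₂ + 1) ≠ 0 := (N_pos hx₂).ne'
    field_simp
  rw [hE₁, hE₂]
  exact div_lt_div_of_pos_left (by positivity) hApos hAB
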